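/- Let K be a subfield of Q̄ and let α ∈ Q̄^×. Then W_K(α) = 0 if and only if α ∈ K^div, i.e., if and only if every conjugate of α over K is a root of unity times α. -/

import Mathlib

noncomputable section

/-- A fixed algebraic closure of `ℚ`. -/
abbrev Qbar : Type := AlgebraicClosure ℚ

/-- The primitive integer minimal polynomial of an algebraic number. -/
noncomputable def intMinpoly (α : Qbar) : Polynomial ℤ :=
  (IsLocalization.integerNormalization (nonZeroDivisors ℤ) (minpoly ℚ α)).primPart

/-- The absolute logarithmic Weil height of an algebraic number, defined via the
(logarithmic) Mahler measure of its primitive integer minimal polynomial. -/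
noncomputable def weilHeight (α : Qbar) : ℝ :=
  ((minpoly ℚ α).natDegree : ℝ)⁻¹ *
    (Real.log |((intMinpoly α).leadingCoeff : ℝ)| +
      (((intMinpoly α).map (Int.castRingHom ℂ)).roots.map
        (fun z => Real.log (max 1 ‖z‖))).sum)

/-- `σ` is an automorphism of `Q̄` fixing `K` pointwise, i.e. `σ ∈ Aut(Q̄/K)`. -/
def fixes (K : Subfield Qbar) (σ : Qbar ≃+* Qbar) : Prop := ∀ x ∈ K, σ x = x

/-- `W_K(α) = max { h(σα/α) : σ ∈ Aut(Q̄/K) }`. -/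
noncomputable def WK (K : Subfield Qbar) (α : Qbar) : ℝ :=
  sSup {r : ℝ | ∃ σ : Qbar ≃+* Qbar, fixes K σ ∧ r = weilHeight (σ α / α)}

/-- `K^div = { γ ∈ Q̄^× : γ^m ∈ K^× for some nonzero integer m }`. -/
def Kdiv (K : Subfield Qbar) : Set Qbar :=
  {γ | γ ≠ 0 ∧ ∃ m : ℤ, m ≠ 0 ∧ γ ^ m ∈ K}

open Polynomial IntermediateField
set_option synthInstance.maxHeartbeats 1000000
set_option maxHeartbeats 2000000

instance instQbarIsAlgebraic : Algebra.IsAlgebraic ℚ Qbar := AlgebraicClosure.isAlgebraic ℚ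

lemma minpoly_ne_zero' (α : Qbar) : minpoly ℚ α ≠ 0 :=
  minpoly.ne_zero ((Algebra.IsAlgebraic.isAlgebraic α).isIntegral)

lemma intMinpoly_content (α : Qbar) : (intMinpoly α).content = 1 :=
  content_primPart _

lemma intMinpoly_map_eq (α : Qbar) : ∃ c : ℚ, c ≠ 0 ∧
    (intMinpoly α).map (Int.castRingHom ℚ) = C c * minpoly ℚ α := by
  obtain ⟨b, hb⟩ := IsLocalization.integerNormalization_map_to_map (nonZeroDivisors ℤ)
    (minpoly ℚ α)
  set p := IsLocalization.integerNormalization (nonZeroDivisors ℤ) (minpoly ℚ α) with hp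
  have hb0 : (b : ℤ) ≠ 0 := nonZeroDivisors.coe_ne_zero b
  have hsmul : (b : ℤ) • minpoly ℚ α = C ((b:ℤ):ℚ) * minpoly ℚ α := by
    ext n; simp [coeff_smul, coeff_C_mul, zsmul_eq_mul]
  have hpne : p ≠ 0 := by
    intro h
    apply minpoly_ne_zero' α
    rw [h, Polynomial.map_zero] at hb
    have h0 : (b : ℤ) • minpoly ℚ α = 0 := hb.symm
    rcases smul_eq_zero.mp h0 with h1 | h2
    · exact absurd h1 hb0
    · exact h2
  have hcont : p.content ≠ 0 := fun h => hpne (content_eq_zero_iff.mp h)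
  have hcne : ((p.content : ℚ)) ≠ 0 := by exact_mod_cast hcont
  refine ⟨(b : ℤ) / (p.content : ℚ), ?_, ?_⟩
  · apply div_ne_zero _ hcne; exact_mod_cast hb0
  · have h2 : p.map (algebraMap ℤ ℚ) =
        C (p.content : ℚ) * (intMinpoly α).map (Int.castRingHom ℚ) := by
      conv_lhs => rw [p.eq_C_content_mul_primPart]
      rw [Polynomial.map_mul, map_C]
      rfl
    have h3 : C ((p.content : ℚ)) * (intMinpoly α).map (Int.castRingHom ℚ)
        = C ((b:ℤ):ℚ) * minpoly ℚ α := by rw [← h2, hb, hsmul]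
    have h4 : C ((p.content:ℚ)) * ((intMinpoly α).map (Int.castRingHom ℚ)) =
        C ((p.content:ℚ)) * (C (((b:ℤ):ℚ) / (p.content:ℚ)) * minpoly ℚ α) := by
      rw [h3, ← mul_assoc, ← C_mul]
      congr 2
      field_simp
    exact mul_left_cancel₀ (by simpa using hcne) h4

lemma intMinpoly_ne_zero (α : Qbar) : intMinpoly α ≠ 0 := by
  obtain ⟨c, hc, h⟩ := intMinpoly_map_eq α
  intro h0
  rw [h0, Polynomial.map_zero] at h
  rcases mul_eq_zero.mp h.symm with h1 | h2
  · exact hc (by simpa using h1)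
  · exact minpoly_ne_zero' α h2

lemma intMinpoly_leadingCoeff_ne_zero (α : Qbar) : (intMinpoly α).leadingCoeff ≠ 0 :=
  fun h => intMinpoly_ne_zero α (leadingCoeff_eq_zero.mp h)

lemma intMinpoly_map_eq' (α : Qbar) :
    (intMinpoly α).map (Int.castRingHom ℚ) =
      C (((intMinpoly α).leadingCoeff : ℚ)) * minpoly ℚ α := by
  obtain ⟨c, hc, h⟩ := intMinpoly_map_eq α
  have hlc : ((intMinpoly α).leadingCoeff : ℚ) = c := by
    have h1 : ((intMinpoly α).map (Int.castRingHom ℚ)).leadingCoeff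
        = ((intMinpoly α).leadingCoeff : ℚ) :=
      leadingCoeff_map_of_leadingCoeff_ne_zero _
        (by simp only [eq_intCast]; exact_mod_cast intMinpoly_leadingCoeff_ne_zero α)
    rw [h] at h1
    rw [leadingCoeff_mul, leadingCoeff_C, (minpoly.monic
      ((Algebra.IsAlgebraic.isAlgebraic α).isIntegral)).leadingCoeff, mul_one] at h1
    exact h1.symm
  rw [hlc]; exact h

lemma intMinpoly_natDegree (α : Qbar) :
    (intMinpoly α).natDegree = (minpoly ℚ α).natDegree := by
  have h1 : ((intMinpoly α).map (Int.castRingHom ℚ)).natDegree = (intMinpoly α).natDegree :=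
    natDegree_map_eq_of_injective (fun a b hab => by simpa only [eq_intCast, Int.cast_inj] using hab) _
  rw [intMinpoly_map_eq' α] at h1
  rw [← h1, natDegree_C_mul (by exact_mod_cast intMinpoly_leadingCoeff_ne_zero α)]

lemma int_cast_comp : (Int.castRingHom ℂ) = (algebraMap ℚ ℂ).comp (Int.castRingHom ℚ) := by
  apply RingHom.ext; intro n; simp

lemma intMinpoly_map_C (α : Qbar) :
    (intMinpoly α).map (Int.castRingHom ℂ) =
      C (((intMinpoly α).leadingCoeff : ℂ)) * (minpoly ℚ α).map (algebraMap ℚ ℂ) := by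
  rw [int_cast_comp, ← Polynomial.map_map, intMinpoly_map_eq' α, Polynomial.map_mul, map_C]
  norm_num

lemma intMinpoly_roots_C (α : Qbar) :
    ((intMinpoly α).map (Int.castRingHom ℂ)).roots =
      ((minpoly ℚ α).map (algebraMap ℚ ℂ)).roots := by
  rw [intMinpoly_map_C, roots_C_mul _ (by exact_mod_cast intMinpoly_leadingCoeff_ne_zero α)]

lemma one_le_abs_lc (α : Qbar) : 1 ≤ |((intMinpoly α).leadingCoeff : ℝ)| := by
  have := intMinpoly_leadingCoeff_ne_zero α
  have h1 : 1 ≤ |(intMinpoly α).leadingCoeff| := Int.one_le_abs this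
  calc (1:ℝ) = ((1:ℤ):ℝ) := by norm_num
  _ ≤ (|(intMinpoly α).leadingCoeff| : ℝ) := by exact_mod_cast h1
  _ = |((intMinpoly α).leadingCoeff : ℝ)| := by push_cast; ring

lemma roots_sum_nonneg (α : Qbar) :
    0 ≤ (((intMinpoly α).map (Int.castRingHom ℂ)).roots.map
        (fun z => Real.log (max 1 ‖z‖))).sum := by
  apply Multiset.sum_nonneg
  intro x hx
  obtain ⟨z, _, rfl⟩ := Multiset.mem_map.mp hx
  exact Real.log_nonneg (le_max_left _ _)

lemma weilHeight_nonneg (α : Qbar) : 0 ≤ weilHeight α := by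
  apply mul_nonneg (by positivity)
  exact add_nonneg (Real.log_nonneg (one_le_abs_lc α)) (roots_sum_nonneg α)

lemma weilHeight_eq_zero_of_pow_eq_one {γ : Qbar} {n : ℕ} (hn : 0 < n) (h : γ ^ n = 1) :
    weilHeight γ = 0 := by
  -- γ is integral over ℤ
  have hint : IsIntegral ℤ γ := ⟨X ^ n - 1, monic_X_pow_sub_C 1 hn.ne', by simp [h]⟩
  -- minpoly ℚ γ divides X^n - 1
  have hdvd : minpoly ℚ γ ∣ X ^ n - 1 := minpoly.dvd ℚ γ (by simp [h])
  -- Gauss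
  have hGauss : minpoly ℚ γ = (minpoly ℤ γ).map (algebraMap ℤ ℚ) :=
    minpoly.isIntegrallyClosed_eq_field_fractions ℚ Qbar hint
  -- leading coefficient is ±1
  have habs : |(intMinpoly γ).leadingCoeff| = 1 := by
    have h1 : (intMinpoly γ).map (Int.castRingHom ℚ) =
        (C ((intMinpoly γ).leadingCoeff) * minpoly ℤ γ).map (Int.castRingHom ℚ) := by
      rw [intMinpoly_map_eq' γ, hGauss, Polynomial.map_mul, map_C]
      norm_num
    have h2 : intMinpoly γ = C ((intMinpoly γ).leadingCoeff) * minpoly ℤ γ :=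
      Polynomial.map_injective _ (fun a b hab => by
        simpa only [eq_intCast, Int.cast_inj] using hab) h1
    have hcont : (intMinpoly γ).content = 1 := intMinpoly_content γ
    have hmonic : (minpoly ℤ γ).content = 1 := ((minpoly.monic hint)).isPrimitive.content_eq_one
    rw [h2, content_C_mul, hmonic, mul_one] at hcont
    rw [Int.abs_eq_normalize]; exact hcont
  have hlc : |((intMinpoly γ).leadingCoeff : ℝ)| = 1 := by
    rw [← Int.cast_abs, habs]; norm_num
  have hroots : ∀ z ∈ ((intMinpoly γ).map (Int.castRingHom ℂ)).roots, ‖z‖ = 1 := by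
    intro z hz
    rw [intMinpoly_roots_C] at hz
    rw [mem_roots'] at hz
    have hz' : z ^ n = 1 := by
      obtain ⟨k, hk⟩ := hdvd
      have h0 : eval z ((X ^ n - 1 : ℚ[X]).map (algebraMap ℚ ℂ)) = 0 := by
        rw [hk, Polynomial.map_mul, eval_mul, hz.2.eq_zero, zero_mul]
      have := h0
      simp only [Polynomial.map_sub, Polynomial.map_pow, map_X, Polynomial.map_one,
        eval_sub, eval_pow, eval_X, eval_one, sub_eq_zero] at this
      exact this
    have h1 : ‖z‖ ^ n = 1 := by
      rw [← norm_pow, hz', norm_one]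
    have hnn := norm_nonneg z
    rcases pow_eq_one_iff_cases.mp h1 with h2 | h2 | h2
    · omega
    · exact h2
    · linarith [h2.1]
  unfold weilHeight
  rw [hlc, Real.log_one]
  rw [Multiset.sum_eq_zero]
  · ring
  · intro x hx
    obtain ⟨z, hz, rfl⟩ := Multiset.mem_map.mp hx
    rw [hroots z hz, max_self, Real.log_one]

lemma multiset_prod_le_one {s : Multiset ℝ} (h : ∀ x ∈ s, 0 ≤ x ∧ x ≤ 1) : s.prod ≤ 1 := by
  induction s using Multiset.induction with
  | empty => simp
  | cons a s ih =>
    rw [Multiset.prod_cons]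
    have ha := h a (Multiset.mem_cons_self a s)
    have hs : s.prod ≤ 1 := ih fun x hx => h x (Multiset.mem_cons_of_mem hx)
    have hsn : 0 ≤ s.prod := Multiset.prod_nonneg fun x hx => (h x (Multiset.mem_cons_of_mem hx)).1
    nlinarith [ha.1, ha.2]

lemma exists_pow_eq_one_of_weilHeight_eq_zero {γ : Qbar} (hγ : γ ≠ 0)
    (h : weilHeight γ = 0) : ∃ n : ℕ, 0 < n ∧ γ ^ n = 1 := by
  have hint : IsIntegral ℚ γ := (Algebra.IsAlgebraic.isAlgebraic γ).isIntegral
  have hd : 0 < (minpoly ℚ γ).natDegree := minpoly.natDegree_pos hint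
  -- the bracket is zero
  have hbr : Real.log |((intMinpoly γ).leadingCoeff : ℝ)| +
      (((intMinpoly γ).map (Int.castRingHom ℂ)).roots.map
        (fun z => Real.log (max 1 ‖z‖))).sum = 0 := by
    have hne : ((minpoly ℚ γ).natDegree : ℝ)⁻¹ ≠ 0 := by positivity
    unfold weilHeight at h
    rcases mul_eq_zero.mp h with h1 | h2
    · exact absurd h1 hne
    · exact h2
  have hL : Real.log |((intMinpoly γ).leadingCoeff : ℝ)| = 0 := by
    have h1 := Real.log_nonneg (one_le_abs_lc γ)
    have h2 := roots_sum_nonneg γ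
    linarith
  have habs : |((intMinpoly γ).leadingCoeff : ℝ)| = 1 := by
    rcases Real.log_eq_zero.mp hL with h1 | h1 | h1
    · linarith [one_le_abs_lc γ]
    · exact h1
    · linarith [one_le_abs_lc γ]
  have hS : (((intMinpoly γ).map (Int.castRingHom ℂ)).roots.map
        (fun z => Real.log (max 1 ‖z‖))).sum = 0 := by linarith [hL, hbr]
  -- all roots have absolute value at most one
  have hle : ∀ z ∈ ((intMinpoly γ).map (Int.castRingHom ℂ)).roots, ‖z‖ ≤ 1 := by
    intro z hz
    by_contra hgt
    push_neg at hgt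
    have hmem : Real.log (max 1 ‖z‖) ∈
        ((intMinpoly γ).map (Int.castRingHom ℂ)).roots.map
          (fun z => Real.log (max 1 ‖z‖)) :=
      Multiset.mem_map_of_mem _ hz
    have hterm : 0 < Real.log (max 1 ‖z‖) := by
      apply Real.log_pos
      rw [max_eq_right hgt.le]
      exact hgt
    have hle' := Multiset.single_le_sum (fun x hx => by
      obtain ⟨w, _, rfl⟩ := Multiset.mem_map.mp hx
      exact Real.log_nonneg (le_max_left _ _)) _ hmem
    rw [hS] at hle'
    linarith
  -- the product of the absolute values of the roots is at least one; so all equal one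
  set p := (intMinpoly γ).map (Int.castRingHom ℂ) with hp
  have hpne : p ≠ 0 := by
    rw [hp]
    intro h0
    exact intMinpoly_ne_zero γ (Polynomial.map_eq_zero_iff (fun a b hab => by
      simpa only [eq_intCast, Int.cast_inj] using hab) |>.mp h0)
  have hc0 : (intMinpoly γ).coeff 0 ≠ 0 := by
    intro h0
    have h1 := congrArg (fun q => Polynomial.coeff q 0) (intMinpoly_map_eq' γ)
    simp only [coeff_map, h0, coeff_C_mul, eq_intCast, Int.cast_zero] at h1
    have h2 := minpoly.coeff_zero_ne_zero hint hγ
    have h3 : ((intMinpoly γ).leadingCoeff : ℚ) ≠ 0 := by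
      exact_mod_cast intMinpoly_leadingCoeff_ne_zero γ
    exact (mul_ne_zero h3 h2) h1.symm
  have hsplit : p = C p.leadingCoeff * (p.roots.map fun a => X - C a).prod :=
    (IsAlgClosed.splits p).eq_prod_roots
  have habs' : ‖p.leadingCoeff‖ = 1 := by
    have h5 : p.leadingCoeff = ((intMinpoly γ).leadingCoeff : ℂ) := by
      rw [hp]
      exact leadingCoeff_map_of_leadingCoeff_ne_zero _ (by
        simp only [eq_intCast]
        exact_mod_cast intMinpoly_leadingCoeff_ne_zero γ)
    rw [h5, Complex.norm_intCast]
    exact_mod_cast habs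
  have hprod : ‖eval 0 p‖ = (p.roots.map (fun z => ‖z‖)).prod := by
    have hnp : ∀ s : Multiset ℂ, ‖s.prod‖ = (s.map (fun z => ‖z‖)).prod :=
      fun s => map_multiset_prod (normHom (α := ℂ)) s
    conv_lhs => rw [hsplit]
    rw [eval_mul, eval_C, norm_mul, habs', one_mul, eval_multiset_prod, Multiset.map_map,
      hnp, Multiset.map_map]
    congr 1
    apply Multiset.map_congr rfl
    intro a _
    simp
  have hone_le : 1 ≤ ‖eval 0 p‖ := by
    have h5 : eval 0 p = ((intMinpoly γ).coeff 0 : ℂ) := by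
      rw [hp, ← coeff_zero_eq_eval_zero, coeff_map, eq_intCast]
    rw [h5, Complex.norm_intCast, ← Int.cast_abs]
    exact_mod_cast Int.one_le_abs hc0
  -- every root has absolute value exactly 1
  have heq1 : ∀ z ∈ p.roots, ‖z‖ = 1 := by
    intro z hz
    have hcons : p.roots = z ::ₘ p.roots.erase z := (Multiset.cons_erase hz).symm
    have hT' : ((p.roots.erase z).map (fun z => ‖z‖)).prod ≤ 1 := by
      apply multiset_prod_le_one
      intro x hx
      obtain ⟨w, hw, rfl⟩ := Multiset.mem_map.mp hx
      exact ⟨norm_nonneg w, hle w (Multiset.mem_of_mem_erase hw)⟩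
    have hT'0 : 0 ≤ ((p.roots.erase z).map (fun z => ‖z‖)).prod := by
      apply Multiset.prod_nonneg
      intro x hx
      obtain ⟨w, _, rfl⟩ := Multiset.mem_map.mp hx
      exact norm_nonneg w
    have h5 : ‖z‖ * ((p.roots.erase z).map (fun z => ‖z‖)).prod =
        (p.roots.map (fun z => ‖z‖)).prod := by
      conv_rhs => rw [hcons]
      rw [Multiset.map_cons, Multiset.prod_cons]
    have h6 : 1 ≤ ‖z‖ * ((p.roots.erase z).map (fun z => ‖z‖)).prod := by
      rw [h5, ← hprod]; exact hone_le
    have h7 := hle z hz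
    have h8 := norm_nonneg z
    nlinarith
  -- γ is an algebraic integer
  have hlcsq : (intMinpoly γ).leadingCoeff * (intMinpoly γ).leadingCoeff = 1 := by
    have habsZ : |(intMinpoly γ).leadingCoeff| = 1 := by exact_mod_cast habs
    rcases (abs_eq (by norm_num : (0:ℤ) ≤ 1)).mp habsZ with h5 | h5 <;> rw [h5] <;> ring
  have hintZ : IsIntegral ℤ γ := by
    refine ⟨C ((intMinpoly γ).leadingCoeff) * intMinpoly γ, ?_, ?_⟩
    · rw [Monic, leadingCoeff_mul, leadingCoeff_C, hlcsq]
    · have h5 : (aeval γ) ((intMinpoly γ).map (algebraMap ℤ ℚ)) = 0 := by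
        rw [show (algebraMap ℤ ℚ) = Int.castRingHom ℚ from rfl, intMinpoly_map_eq' γ]
        rw [map_mul, aeval_C, minpoly.aeval, mul_zero]
      rw [Polynomial.aeval_map_algebraMap] at h5
      rw [← Polynomial.aeval_def, map_mul, h5, mul_zero]
  -- pass to the number field ℚ⟮γ⟯
  let E := ℚ⟮γ⟯
  haveI : FiniteDimensional ℚ E := IntermediateField.adjoin.finiteDimensional hint
  haveI : NumberField E := ⟨⟩
  set x : E := IntermediateField.AdjoinSimple.gen ℚ γ with hx
  have hxmap : algebraMap E Qbar x = γ := IntermediateField.AdjoinSimple.algebraMap_gen ℚ γ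
  have hxint : IsIntegral ℤ x := by
    rw [← isIntegral_algebraMap_iff (algebraMap E Qbar).injective, hxmap]
    exact hintZ
  have hnorm : ∀ φ : E →+* ℂ, ‖φ x‖ = 1 := by
    intro φ
    have hmin : minpoly ℚ x = minpoly ℚ γ := by
      rw [← hxmap]
      exact (minpoly.algebraMap_eq (algebraMap E Qbar).injective x).symm
    have h5 : aeval x (minpoly ℚ γ) = 0 := by rw [← hmin]; exact minpoly.aeval ℚ x
    have h6 : eval₂ (φ.comp (algebraMap ℚ E)) (φ x) (minpoly ℚ γ) = 0 := by
      rw [aeval_def] at h5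
      rw [← Polynomial.hom_eval₂, h5, map_zero]
    have h7 : φ.comp (algebraMap ℚ E) = algebraMap ℚ ℂ := Subsingleton.elim _ _
    rw [h7] at h6
    have h8 : φ x ∈ p.roots := by
      rw [hp, intMinpoly_roots_C]
      rw [mem_roots']
      constructor
      · exact Polynomial.map_ne_zero (minpoly_ne_zero' γ)
      · rw [IsRoot, eval_map]; exact h6
    have := heq1 _ h8
    exact this
  obtain ⟨n, hn, hxn⟩ := NumberField.Embeddings.pow_eq_one_of_norm_eq_one E ℂ hxint hnorm
  refine ⟨n, hn, ?_⟩
  have := congrArg (algebraMap E Qbar) hxn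
  rwa [map_pow, hxmap, map_one] at this

lemma isAlgebraic_over (K : Subfield Qbar) : Algebra.IsAlgebraic ↥K Qbar :=
  Algebra.IsAlgebraic.tower_top (K := ℚ) ↥K

/-- Turn a ring automorphism fixing `K` into a `K`-algebra automorphism. -/
def fixesAlgEquiv {K : Subfield Qbar} {σ : Qbar ≃+* Qbar} (hσ : fixes K σ) :
    Qbar ≃ₐ[↥K] Qbar :=
  AlgEquiv.ofRingEquiv (f := σ) (fun k => hσ k k.2)

lemma fixesAlgEquiv_apply {K : Subfield Qbar} {σ : Qbar ≃+* Qbar} (hσ : fixes K σ) (x : Qbar) :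
    fixesAlgEquiv hσ x = σ x := rfl

lemma conj_aeval {K : Subfield Qbar} {σ : Qbar ≃+* Qbar} (hσ : fixes K σ) (α : Qbar) :
    aeval (σ α) (minpoly ↥K α) = 0 := by
  have h := Polynomial.aeval_algHom_apply (fixesAlgEquiv hσ).toAlgHom α (minpoly ↥K α)
  rw [minpoly.aeval, map_zero] at h
  rw [← h]; rfl

/-- An element fixed by all automorphisms over `K` lies in `K`. -/
lemma mem_of_fixed (K : Subfield Qbar) (x : Qbar)
    (hfix : ∀ σ : Qbar ≃+* Qbar, fixes K σ → σ x = x) : x ∈ K := by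
  haveI : DecidableEq Qbar := Classical.decEq _
  haveI : Algebra.IsAlgebraic ↥K Qbar := isAlgebraic_over K
  have hint : IsIntegral ↥K x := Algebra.IsIntegral.isIntegral x
  -- every root of the minimal polynomial equals x
  have hroot : ∀ y ∈ (minpoly ↥K x).aroots Qbar, y = x := by
    intro y hy
    -- build an automorphism sending x to y
    have hy' : aeval y (minpoly ↥K x) = 0 := (mem_aroots.mp hy).2
    let f₀ : ↥K⟮x⟯ →ₐ[↥K] Qbar :=
      (IntermediateField.algHomAdjoinIntegralEquiv ↥K hint).symm ⟨y, hy⟩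
    haveI : Algebra.IsAlgebraic (↥K⟮x⟯) Qbar :=
      Algebra.IsAlgebraic.tower_top (K := ↥K) ↥K⟮x⟯
    obtain ⟨ψ, hψ⟩ := IsAlgClosed.surjective_restrictDomain_of_isAlgebraic
      (K := ↥K) (L := ↥K⟮x⟯) (E := Qbar) (M := Qbar) f₀
    have hbij : Function.Bijective ψ := Algebra.IsAlgebraic.algHom_bijective ψ
    let σ' := AlgEquiv.ofBijective ψ hbij
    have hfixes : fixes K σ'.toRingEquiv := by
      intro k hk
      exact ψ.commutes ⟨k, hk⟩
    have hψx : ψ x = y := by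
      have h1 : ψ (algebraMap (↥K⟮x⟯) Qbar (AdjoinSimple.gen ↥K x)) =
          f₀ (AdjoinSimple.gen ↥K x) := by
        rw [← hψ]; rfl
      rw [AdjoinSimple.algebraMap_gen] at h1
      rw [h1]
      exact algHomAdjoinIntegralEquiv_symm_apply_gen ↥K hint ⟨y, hy⟩
    have := hfix σ'.toRingEquiv hfixes
    have hσx : σ'.toRingEquiv x = ψ x := rfl
    rw [hσx, hψx] at this
    exact this.symm ▸ rfl
  -- minpoly has degree one
  have hsep : (minpoly ↥K x).Separable := (minpoly.irreducible hint).separable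
  have hxroot : x ∈ (minpoly ↥K x).aroots Qbar :=
    mem_aroots.mpr ⟨minpoly.ne_zero hint, minpoly.aeval ↥K x⟩
  have hnodup : ((minpoly ↥K x).aroots Qbar).Nodup :=
    nodup_roots (Polynomial.Separable.map hsep)
  have hcard : ((minpoly ↥K x).aroots Qbar).card = (minpoly ↥K x).natDegree :=
    ((IsAlgClosed.splits ((minpoly ↥K x).map (algebraMap ↥K Qbar))).natDegree_eq_card_roots.symm.trans
      (natDegree_map _))
  have hcount : ((minpoly ↥K x).aroots Qbar).count x = ((minpoly ↥K x).aroots Qbar).card :=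
    Multiset.count_eq_card.mpr (fun y hy => (hroot y hy).symm)
  have hle1 : ((minpoly ↥K x).aroots Qbar).count x ≤ 1 :=
    (Multiset.nodup_iff_count_le_one.mp hnodup) x
  have hdeg : (minpoly ↥K x).natDegree = 1 := by
    have hpos : 0 < (minpoly ↥K x).natDegree := minpoly.natDegree_pos hint
    omega
  -- conclude
  obtain ⟨c, hc⟩ : ∃ c, minpoly ↥K x = X + C c := by
    have := (minpoly.monic hint).eq_X_add_C hdeg
    exact ⟨_, this⟩
  have := minpoly.aeval ↥K x
  rw [hc, map_add, aeval_X, aeval_C] at this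
  have hx : x = algebraMap ↥K Qbar (-c) := by
    rw [map_neg]; linear_combination this
  rw [hx]
  exact (-c).2


/-- If `K` is a subfield of `Q̄` and `α ∈ Q̄^×`, then `W_K(α) = 0` if and only if
`α ∈ K^div`, i.e. if and only if every conjugate of `α` over `K` is a root of unity
times `α`. -/
theorem stmt1 (K : Subfield Qbar) (α : Qbar) (hα : α ≠ 0) :
    (WK K α = 0 ↔ α ∈ Kdiv K) ∧
    (α ∈ Kdiv K ↔ ∀ σ : Qbar ≃+* Qbar, fixes K σ →
      ∃ ζ : Qbar, (∃ n : ℕ, 0 < n ∧ ζ ^ n = 1) ∧ σ α = ζ * α) := by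
  classical
  haveI : Algebra.IsAlgebraic ↥K Qbar := isAlgebraic_over K
  have hintK : IsIntegral ↥K α := Algebra.IsIntegral.isIntegral α
  -- the second equivalence
  have part2 : α ∈ Kdiv K ↔ ∀ σ : Qbar ≃+* Qbar, fixes K σ →
      ∃ ζ : Qbar, (∃ n : ℕ, 0 < n ∧ ζ ^ n = 1) ∧ σ α = ζ * α := by
    constructor
    · rintro ⟨hα0, m, hm0, hmem⟩
      -- get a positive natural power of α lying in K
      obtain ⟨k, hk, hkK⟩ : ∃ k : ℕ, 0 < k ∧ α ^ k ∈ K := by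
        rcases lt_or_gt_of_ne hm0 with hneg | hpos
        · refine ⟨(-m).toNat, by omega, ?_⟩
          have h1 : α ^ ((-m).toNat : ℤ) = (α ^ m)⁻¹ := by
            rw [Int.toNat_of_nonneg (by omega), zpow_neg]
          have h2 : α ^ ((-m).toNat : ℤ) = α ^ (-m).toNat := zpow_natCast α _
          rw [← h2, h1]
          exact K.inv_mem hmem
        · refine ⟨m.toNat, by omega, ?_⟩
          have h2 : α ^ (m.toNat : ℤ) = α ^ m.toNat := zpow_natCast α _
          rw [← h2, Int.toNat_of_nonneg (by omega)]
          exact hmem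
      intro σ hσ
      refine ⟨σ α / α, ⟨k, hk, ?_⟩, (div_mul_cancel₀ _ hα).symm⟩
      have h1 : σ (α ^ k) = α ^ k := hσ _ hkK
      rw [map_pow] at h1
      rw [div_pow, h1, div_self (pow_ne_zero k hα)]
    · intro h
      -- a uniform exponent killing all the ratios
      set S := ((minpoly ↥K α).aroots Qbar).toFinset with hS
      set n : Qbar → ℕ := fun β =>
        if h' : ∃ n : ℕ, 0 < n ∧ (β / α) ^ n = 1 then h'.choose else 1 with hn
      have hnpos : ∀ β, 0 < n β := by
        intro β
        rw [hn]
        by_cases h' : ∃ n : ℕ, 0 < n ∧ (β / α) ^ n = 1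
        · simp only [dif_pos h']; exact h'.choose_spec.1
        · simp only [dif_neg h']; norm_num
      set m := ∏ β ∈ S, n β with hm
      have hmpos : 0 < m := Finset.prod_pos fun β _ => hnpos β
      have key : ∀ σ : Qbar ≃+* Qbar, fixes K σ → (σ α / α) ^ m = 1 := by
        intro σ hσ
        obtain ⟨ζ, ⟨k, hk, hζk⟩, hσα⟩ := h σ hσ
        have hζ : σ α / α = ζ := by rw [hσα, mul_div_cancel_right₀ _ hα]
        have hβS : σ α ∈ S := by
          rw [hS, Multiset.mem_toFinset, mem_aroots]
          exact ⟨minpoly.ne_zero hintK, conj_aeval hσ α⟩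
        have hex : ∃ n : ℕ, 0 < n ∧ (σ α / α) ^ n = 1 := ⟨k, hk, by rw [hζ]; exact hζk⟩
        have hspec : (σ α / α) ^ (n (σ α)) = 1 := by
          rw [hn]; simp only [dif_pos hex]; exact hex.choose_spec.2
        obtain ⟨c, hc⟩ : n (σ α) ∣ m := Finset.dvd_prod_of_mem n hβS
        rw [hc, pow_mul, hspec, one_pow]
      have hfixed : ∀ σ : Qbar ≃+* Qbar, fixes K σ → σ (α ^ m) = α ^ m := by
        intro σ hσ
        have h1 : σ α = (σ α / α) * α := (div_mul_cancel₀ _ hα).symm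
        rw [map_pow, h1, mul_pow, key σ hσ, one_mul]
      have hmemK : α ^ m ∈ K := mem_of_fixed K _ hfixed
      refine ⟨hα, m, by exact_mod_cast hmpos.ne', ?_⟩
      rw [zpow_natCast]
      exact hmemK
  refine ⟨⟨?_, ?_⟩, part2⟩
  · -- WK = 0 → α ∈ Kdiv
    intro hWK
    -- the set is bounded above since there are finitely many conjugates
    have hbdd : BddAbove {r : ℝ | ∃ σ : Qbar ≃+* Qbar, fixes K σ ∧ r = weilHeight (σ α / α)} := by
      apply Set.Finite.bddAbove
      apply Set.Finite.subset (Set.Finite.image (fun β => weilHeight (β / α))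
        (((minpoly ↥K α).aroots Qbar).toFinset.finite_toSet))
      rintro r ⟨σ, hσ, rfl⟩
      refine ⟨σ α, ?_, rfl⟩
      rw [Finset.mem_coe, Multiset.mem_toFinset, mem_aroots]
      exact ⟨minpoly.ne_zero hintK, conj_aeval hσ α⟩
    apply part2.mpr
    intro σ hσ
    have hmem : weilHeight (σ α / α) ∈
        {r : ℝ | ∃ σ : Qbar ≃+* Qbar, fixes K σ ∧ r = weilHeight (σ α / α)} := ⟨σ, hσ, rfl⟩
    have hle : weilHeight (σ α / α) ≤ 0 := by
      rw [← hWK]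
      exact le_csSup hbdd hmem
    have heq : weilHeight (σ α / α) = 0 := le_antisymm hle (weilHeight_nonneg _)
    have hne : σ α / α ≠ 0 := div_ne_zero (by
      intro h0
      exact hα (by simpa using congrArg σ.symm h0)) hα
    obtain ⟨nn, hnn, hpow⟩ := exists_pow_eq_one_of_weilHeight_eq_zero hne heq
    exact ⟨σ α / α, ⟨nn, hnn, hpow⟩, (div_mul_cancel₀ _ hα).symm⟩
  · -- α ∈ Kdiv → WK = 0
    intro hKdiv
    have hall : ∀ r ∈ {r : ℝ | ∃ σ : Qbar ≃+* Qbar, fixes K σ ∧ r = weilHeight (σ α / α)},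
        r = 0 := by
      rintro r ⟨σ, hσ, rfl⟩
      obtain ⟨ζ, ⟨nn, hnn, hζn⟩, hσα⟩ := part2.mp hKdiv σ hσ
      have hζ : σ α / α = ζ := by rw [hσα, mul_div_cancel_right₀ _ hα]
      rw [hζ]
      exact weilHeight_eq_zero_of_pow_eq_one hnn hζn
    have h0mem : (0:ℝ) ∈ {r : ℝ | ∃ σ : Qbar ≃+* Qbar, fixes K σ ∧ r = weilHeight (σ α / α)} := by
      refine ⟨RingEquiv.refl _, fun x _ => rfl, ?_⟩
      rw [show (RingEquiv.refl Qbar) α = α from rfl, div_self hα]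
      exact (weilHeight_eq_zero_of_pow_eq_one one_pos (one_pow 1)).symm
    have hset : {r : ℝ | ∃ σ : Qbar ≃+* Qbar, fixes K σ ∧ r = weilHeight (σ α / α)} = {0} :=
      Set.eq_singleton_iff_unique_mem.mpr ⟨h0mem, hall⟩
    rw [WK, hset, csSup_singleton]

end
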